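/- arXiv:2008.01603 — 4 statements merged into one kernel-verified Lean document; each statement's English description precedes it below -/
import Mathlib

section
/- Let ψ₁ : H₁ → G and ψ₂ : H₂ → G be Frattini covers of finite groups (i.e. surjections such that any subgroup of the source mapping onto G is the whole source). If H is a subgroup of the fiber product H₁ ×_G H₂ that surjects onto G and is minimal among such subgroups, then both projection maps H → H₁ and H → H₂ are surjective. -/
/-- If `ψ₁ : H₁ → G`, `ψ₂ : H₂ → G` are Frattini covers of finite groups and
`H` is minimal among subgroups of the fiber product `H₁ ×_G H₂` surjecting onto `G`,
then both projections of `H` are surjective. -/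
theorem frattini_fiber_product_projections_surjective
    {H₁ H₂ G : Type*} [Group H₁] [Group H₂] [Group G]
    [Finite H₁] [Finite H₂] [Finite G]
    (ψ₁ : H₁ →* G) (ψ₂ : H₂ →* G)
    (hsurj₁ : Function.Surjective ψ₁) (hsurj₂ : Function.Surjective ψ₂)
    (hfrat₁ : ∀ K : Subgroup H₁, Subgroup.map ψ₁ K = ⊤ → K = ⊤)
    (hfrat₂ : ∀ K : Subgroup H₂, Subgroup.map ψ₂ K = ⊤ → K = ⊤)
    (H : Subgroup (H₁ × H₂))
    (hHfiber : H ≤ MonoidHom.eqLocus (ψ₁.comp (MonoidHom.fst H₁ H₂))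
      (ψ₂.comp (MonoidHom.snd H₁ H₂)))
    (hHsurj : Subgroup.map (ψ₁.comp (MonoidHom.fst H₁ H₂)) H = ⊤)
    (hHmin : ∀ K : Subgroup (H₁ × H₂),
      K ≤ MonoidHom.eqLocus (ψ₁.comp (MonoidHom.fst H₁ H₂)) (ψ₂.comp (MonoidHom.snd H₁ H₂)) →
      Subgroup.map (ψ₁.comp (MonoidHom.fst H₁ H₂)) K = ⊤ → K ≤ H → K = H) :
    Subgroup.map (MonoidHom.fst H₁ H₂) H = ⊤ ∧
      Subgroup.map (MonoidHom.snd H₁ H₂) H = ⊤ := by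
  constructor
  · apply hfrat₁
    rw [Subgroup.map_map]
    exact hHsurj
  · apply hfrat₂
    rw [Subgroup.map_map]
    have : Subgroup.map (ψ₂.comp (MonoidHom.snd H₁ H₂)) H
        = Subgroup.map (ψ₁.comp (MonoidHom.fst H₁ H₂)) H := by
      ext x
      simp only [Subgroup.mem_map]
      constructor
      · rintro ⟨h, hh, rfl⟩; exact ⟨h, hh, hHfiber hh⟩
      · rintro ⟨h, hh, rfl⟩; exact ⟨h, hh, (hHfiber hh).symm⟩
    rw [this, hHsurj]
end

section
/- The natural reduction map SL₂(Z/9) → SL₂(Z/3) is not a Frattini cover: there exists a proper subgroup of SL₂(Z/9) that maps surjectively onto SL₂(Z/3). -/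
set_option maxRecDepth 4000

abbrev T9 := ZMod 9 × ZMod 9 × ZMod 9 × ZMod 9
abbrev T3 := ZMod 3 × ZMod 3 × ZMod 3 × ZMod 3

def L : List T9 := [(0,2,4,0), (0,7,5,0), (1,0,0,1), (1,1,7,8), (1,4,6,7), (1,6,1,7), (2,4,6,8), (2,5,4,6), (2,6,1,8), (2,7,8,6), (3,5,4,7), (3,7,8,7), (4,2,5,5), (5,7,4,4), (6,2,1,2), (6,4,5,2), (7,2,1,3), (7,3,8,1), (7,4,5,3), (7,5,3,1), (8,0,0,8), (8,3,8,2), (8,5,3,2), (8,8,2,1)]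

def mulT : T9 → T9 → T9 := fun (a, b, c, d) (a', b', c', d') =>
  (a * a' + b * c', a * b' + b * d', c * a' + d * c', c * b' + d * d')

def invT : T9 → T9 := fun (a, b, c, d) => (d, -b, -c, a)

def c3 : ZMod 9 →+* ZMod 3 := ZMod.castHom (show (3:ℕ) ∣ 9 by norm_num) (ZMod 3)

def redT : T9 → T3 := fun (a, b, c, d) => (c3 a, c3 b, c3 c, c3 d)

def tup (x : Matrix.SpecialLinearGroup (Fin 2) (ZMod 9)) : T9 :=
  (x.1 0 0, x.1 0 1, x.1 1 0, x.1 1 1)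

lemma tup_mul (a b : Matrix.SpecialLinearGroup (Fin 2) (ZMod 9)) :
    tup (a * b) = mulT (tup a) (tup b) := by
  simp [tup, mulT, Matrix.SpecialLinearGroup.coe_mul, Matrix.mul_apply, Fin.sum_univ_two]

lemma tup_inv (a : Matrix.SpecialLinearGroup (Fin 2) (ZMod 9)) :
    tup a⁻¹ = invT (tup a) := by
  rw [Matrix.SpecialLinearGroup.SL2_inv_expl]
  simp [tup, invT]

def Ksub : Subgroup (Matrix.SpecialLinearGroup (Fin 2) (ZMod 9)) where
  carrier := {x | tup x ∈ L}
  one_mem' := by decide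
  mul_mem' := by
    intro a b ha hb
    have h : L.Forall (fun x => L.Forall (fun y => mulT x y ∈ L)) := by decide
    rw [List.forall_iff_forall_mem] at h
    have h2 := h (tup a) ha
    rw [List.forall_iff_forall_mem] at h2
    show tup (a * b) ∈ L
    rw [tup_mul]
    exact h2 (tup b) hb
  inv_mem' := by
    intro a ha
    have h : L.Forall (fun x => invT x ∈ L) := by decide
    rw [List.forall_iff_forall_mem] at h
    show tup a⁻¹ ∈ L
    rw [tup_inv]
    exact h (tup a) ha

def mSL (a b c d : ZMod 9) (h : a * d - b * c = 1) :
    Matrix.SpecialLinearGroup (Fin 2) (ZMod 9) :=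
  ⟨!![a, b; c, d], by rw [Matrix.det_fin_two_of]; exact h⟩

/-- The reduction map `SL₂(ℤ/9) → SL₂(ℤ/3)` is not a Frattini cover: some
proper subgroup of `SL₂(ℤ/9)` maps onto `SL₂(ℤ/3)`. -/
theorem SL2_nine_to_three_not_frattini :
    ∃ K : Subgroup (Matrix.SpecialLinearGroup (Fin 2) (ZMod 9)),
      K ≠ ⊤ ∧
      Subgroup.map
        (Matrix.SpecialLinearGroup.map (ZMod.castHom (by norm_num : (3:ℕ) ∣ 9) (ZMod 3))) K
        = ⊤ := by
  refine ⟨Ksub, ?_, ?_⟩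
  · intro h
    have h2 : mSL 1 3 0 1 (by decide) ∈ Ksub := h ▸ Subgroup.mem_top _
    have h3 : tup (mSL 1 3 0 1 (by decide)) ∈ L := h2
    have h4 : tup (mSL 1 3 0 1 (by decide)) = (1, 3, 0, 1) := rfl
    rw [h4] at h3
    exact absurd h3 (by decide)
  · rw [Subgroup.eq_top_iff']
    intro g
    rw [Subgroup.mem_map]
    have detL : ∀ t ∈ L, t.1 * t.2.2.2 - t.2.1 * t.2.2.1 = 1 := by
      have h : L.Forall (fun t => t.1 * t.2.2.2 - t.2.1 * t.2.2.1 = 1) := by decide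
      rw [List.forall_iff_forall_mem] at h
      exact h
    have key : ∀ u : T3, u.1 * u.2.2.2 - u.2.1 * u.2.2.1 = 1 → u ∈ L.map redT := by decide
    have hdet : g.1 0 0 * g.1 1 1 - g.1 0 1 * g.1 1 0 = 1 := by
      have := g.2
      rwa [Matrix.det_fin_two] at this
    have hg := key (g.1 0 0, g.1 0 1, g.1 1 0, g.1 1 1) hdet
    rw [List.mem_map] at hg
    obtain ⟨t, ht, hrt⟩ := hg
    obtain ⟨a, b, c, d⟩ := t
    have hdt := detL (a, b, c, d) ht
    simp only [redT, Prod.mk.injEq] at hrt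
    obtain ⟨h1, h2, h3, h4⟩ := hrt
    simp only [c3, ZMod.castHom_apply] at h1 h2 h3 h4
    refine ⟨mSL a b c d hdt, ht, ?_⟩
    apply Matrix.SpecialLinearGroup.ext
    intro i j
    fin_cases i <;> fin_cases j <;>
      simp only [Matrix.SpecialLinearGroup.map_apply_coe, RingHom.mapMatrix_apply,
        Matrix.map_apply, mSL] <;>
      simp [Matrix.cons_val_zero, Matrix.cons_val_one, Matrix.head_cons] <;>
      first
        | exact h1 | exact h2 | exact h3 | exact h4
end

section
/- For every prime ℓ > 3 and every k ≥ 0, the reduction map SL₂(Z/ℓ^{k+1}) → SL₂(Z/ℓ) is a Frattini cover: any subgroup of SL₂(Z/ℓ^{k+1}) that maps surjectively onto SL₂(Z/ℓ) is all of SL₂(Z/ℓ^{k+1}). -/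
open Matrix Finset

namespace SL2FrattiniAux

abbrev MatF (R : Type*) := Matrix (Fin 2) (Fin 2) R

/-! ### Nat arithmetic facts -/

lemma dvd_sum_id {ℓ : ℕ} (hp : ℓ.Prime) (h3 : 3 < ℓ) : ℓ ∣ ∑ i ∈ range ℓ, i := by
  have h2 : (∑ i ∈ range ℓ, i) * 2 = ℓ * (ℓ - 1) := Finset.sum_range_id_mul_two ℓ
  have hdvd : ℓ ∣ (∑ i ∈ range ℓ, i) * 2 := h2 ▸ ⟨ℓ - 1, rfl⟩
  have hco : Nat.Coprime ℓ 2 := (Nat.coprime_primes hp Nat.prime_two).mpr (by omega)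
  exact hco.dvd_of_dvd_mul_right hdvd

lemma nat_sq_sum (n : ℕ) : 6 * ∑ i ∈ range (n+1), i*i = n*(n+1)*(2*n+1) := by
  induction n with
  | zero => simp
  | succ n ih => rw [sum_range_succ, Nat.mul_add, ih]; ring

lemma dvd_sum_sq {ℓ : ℕ} (hp : ℓ.Prime) (h3 : 3 < ℓ) : ℓ ∣ ∑ i ∈ range ℓ, i*i := by
  obtain ⟨n, rfl⟩ : ∃ n, ℓ = n + 1 := ⟨ℓ - 1, by omega⟩
  have h6 : (n+1) ∣ 6 * ∑ i ∈ range (n+1), i*i := by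
    rw [nat_sq_sum]; exact ⟨n*(2*n+1), by ring⟩
  have hco : Nat.Coprime (n+1) 6 := by
    have h2 : Nat.Coprime (n+1) 2 := (Nat.coprime_primes hp Nat.prime_two).mpr (by omega)
    have h3' : Nat.Coprime (n+1) 3 := (Nat.coprime_primes hp Nat.prime_three).mpr (by omega)
    rw [show (6:ℕ) = 2*3 from rfl]
    exact Nat.Coprime.mul_right h2 h3'
  exact hco.dvd_of_dvd_mul_left h6

lemma dvd_choose_term {ℓ : ℕ} (hp : ℓ.Prime) (h3 : 3 < ℓ) (i : ℕ) :
    ∀ m, 2 ≤ m → m ≤ ℓ → ℓ^(i+3) ∣ ℓ^((i+1)*(m)) * Nat.choose ℓ m := by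
  intro m h2m hmℓ
  rcases eq_or_lt_of_le hmℓ with rfl | hlt
  · rw [Nat.choose_self, mul_one]
    exact pow_dvd_pow _ (by nlinarith)
  · obtain ⟨c, hc⟩ := hp.dvd_choose_self (by omega) hlt
    rw [hc, ← mul_assoc]
    have h : ℓ^((i+1)*m) * ℓ = ℓ^((i+1)*m + 1) := by ring
    rw [h]
    exact Dvd.dvd.mul_right (pow_dvd_pow _ (by nlinarith)) c

/-! ### Generic ring facts -/

lemma one_add_pow_sq_zero {A : Type*} [Ring A] {a : A} (h : a * a = 0) (n : ℕ) :
    (1 + a) ^ n = 1 + n • a := by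
  induction n with
  | zero => simp
  | succ n ih =>
    rw [pow_succ, ih, succ_nsmul]
    rw [mul_add, mul_one, add_mul, one_mul, smul_mul_assoc, h, smul_zero, add_zero]
    abel

lemma form_mul {R : Type*} [CommRing R] (π : R) (i : ℕ) {A B E F X Y : MatF R}
    (hX : X = 1 + π^(i+1) • A + π^(i+2) • E) (hY : Y = 1 + π^(i+1) • B + π^(i+2) • F) :
    ∃ G, X * Y = 1 + π^(i+1) • (A + B) + π^(i+2) • G := by
  refine ⟨E + F + π^i • (A*B) + π^(i+1) • (A*F) + π^(i+1) • (E*B) + π^(i+2) • (E*F), ?_⟩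
  subst hX hY
  simp only [mul_add, add_mul, one_mul, mul_one, smul_mul_assoc, mul_smul_comm, smul_smul,
    smul_add]
  module

lemma form_pow_step {R : Type*} [CommRing R] {ℓ : ℕ} (hp : ℓ.Prime) (h3 : 3 < ℓ) (i : ℕ)
    (N E y : MatF R) (hy : y = 1 + (ℓ:R)^(i+1) • N + (ℓ:R)^(i+2) • E) :
    ∃ E', y ^ ℓ = 1 + (ℓ:R)^(i+2) • N + (ℓ:R)^(i+3) • E' := by
  set π : R := (ℓ : R) with hπ
  set W : MatF R := N + π • E with hW
  set M : MatF R := π^(i+1) • W with hM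
  have hyM : y = M + 1 := by
    rw [hy, hM, hW, smul_add, smul_smul, ← pow_succ]
    abel
  have hbin : y ^ ℓ = ∑ m ∈ range (ℓ+1), M ^ m * 1 ^ (ℓ - m) * (Nat.choose ℓ m : MatF R) := by
    rw [hyM, Commute.add_pow (Commute.one_right M)]
  simp only [one_pow, mul_one] at hbin
  obtain ⟨l2, hl2⟩ : ∃ l2, ℓ = l2 + 2 := ⟨ℓ-2, by omega⟩
  rw [show ℓ + 1 = l2 + 3 from by omega] at hbin
  rw [Finset.sum_range_succ', Finset.sum_range_succ'] at hbin
  have h0 : M ^ 0 * (Nat.choose ℓ 0 : MatF R) = 1 := by simp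
  have h1 : M ^ 1 * (Nat.choose ℓ 1 : MatF R) = π^(i+2) • N + π^(i+3) • E := by
    rw [pow_one, Nat.choose_one_right]
    rw [← (Nat.cast_commute ℓ M).eq, ← nsmul_eq_mul, ← Nat.cast_smul_eq_nsmul R]
    rw [← hπ, hM, smul_smul, ← pow_succ', hW, smul_add, smul_smul, ← pow_succ]
  have key : ∀ m : ℕ, ∃ X : MatF R, m ∈ range (l2+1) →
      M ^ (m+1+1) * (Nat.choose ℓ (m+1+1) : MatF R) = π^(i+3) • X := by
    intro m
    by_cases hm : m ∈ range (l2+1)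
    · rw [mem_range] at hm
      have hform : M ^ (m+2) * (Nat.choose ℓ (m+2) : MatF R)
          = ((ℓ^((i+1)*(m+2)) * Nat.choose ℓ (m+2) : ℕ) : R) • W ^ (m+2) := by
        rw [hM, smul_pow, ← pow_mul]
        rw [← (Nat.cast_commute (Nat.choose ℓ (m+2)) (π ^ ((i+1)*(m+2)) • W ^ (m+2))).eq,
          ← nsmul_eq_mul, ← Nat.cast_smul_eq_nsmul R, smul_smul, hπ]
        push_cast
        module
      obtain ⟨c, hc⟩ := dvd_choose_term hp h3 i (m+2) (by omega) (by omega)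
      refine ⟨(c : R) • W ^ (m+2), fun _ => ?_⟩
      rw [show m+1+1 = m+2 from rfl, hform, hc, smul_smul, hπ]
      push_cast
      module
    · exact ⟨0, fun h => absurd h hm⟩
  choose X hX using key
  have htail : ∑ m ∈ range (l2+1), M ^ (m+1+1) * (Nat.choose ℓ (m+1+1) : MatF R)
      = π^(i+3) • ∑ m ∈ range (l2+1), X m := by
    rw [Finset.smul_sum]
    exact Finset.sum_congr rfl fun m hm => hX m hm
  refine ⟨(∑ m ∈ range (l2+1), X m) + E, ?_⟩
  rw [hbin, htail, h0, h1, smul_add]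
  abel

section BasePow
variable {R : Type*} [CommRing R]

lemma base_pow {ℓ : ℕ} (hp : ℓ.Prime) (h3 : 3 < ℓ) {N : MatF R} (hN2 : N * N = 0)
    (B x : MatF R) (hx : x = 1 + N + (ℓ:R) • B) :
    ∃ E, x ^ ℓ = 1 + (ℓ:R) • N + (ℓ:R)^2 • E := by
  set π : R := (ℓ : R) with hπ
  have h1 : (1 + N) * (1 - N) = 1 := by
    rw [mul_sub, mul_one, add_mul, one_mul, hN2]
    abel
  have h1' : (1 - N) * (1 + N) = 1 := by
    rw [sub_mul, one_mul, mul_add, mul_one, hN2]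
    abel
  set C : MatF R := (1 - N) * B with hC
  have hfact : x = (1 + N) * (1 + π • C) := by
    rw [mul_add, mul_one, mul_smul_comm, hC, ← mul_assoc, h1, one_mul, hx]
  set Cc : ℕ → MatF R := fun n => (1 - (n:R) • N) * C * (1 + (n:R) • N) with hCc
  have hCstep : ∀ n : ℕ, (1 - N) * Cc n * (1 + N) = Cc (n+1) := by
    intro n
    have e1 : (1 - N) * (1 - (n:R) • N) = 1 - ((n:ℕ)+1:R) • N := by
      rw [mul_sub, mul_one, sub_mul, one_mul, mul_smul_comm, hN2, smul_zero, sub_zero]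
      module
    have e2 : (1 + (n:R) • N) * (1 + N) = 1 + ((n:ℕ)+1:R) • N := by
      rw [mul_add, mul_one, add_mul, one_mul, smul_mul_assoc, hN2, smul_zero, add_zero]
      module
    calc (1 - N) * Cc n * (1 + N)
        = ((1 - N) * (1 - (n:R) • N)) * C * ((1 + (n:R) • N) * (1 + N)) := by
          simp only [hCc]; simp only [mul_assoc]
      _ = Cc (n+1) := by rw [e1, e2]; simp only [hCc]; push_cast; rfl
  have hUp : ∀ c : R, (1 + c • N) * (1 + N) = 1 + (c+1) • N := by
    intro c
    rw [mul_add, mul_one, add_mul, one_mul, smul_mul_assoc, hN2, smul_zero, add_zero]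
    module
  have main : ∀ n : ℕ, ∃ E : MatF R,
      x ^ n = (1 + (n:R) • N) * (1 + π • (∑ i ∈ range n, Cc i) + π^2 • E) := by
    intro n
    induction n with
    | zero => exact ⟨0, by simp⟩
    | succ n ih =>
      obtain ⟨E, hE⟩ := ih
      set S : MatF R := ∑ i ∈ range n, Cc i with hS
      set S' : MatF R := (1 - N) * S * (1 + N) with hS'
      set E₂ : MatF R := (1 - N) * E * (1 + N) with hE₂
      have hN2a : ∀ X : MatF R, N * (N * X) = 0 := by
        intro X; rw [← mul_assoc, hN2, zero_mul]
      have hmid : (1 + π • S + π^2 • E) * (1 + N)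
          = (1 + N) * (1 + π • S' + π^2 • E₂) := by
        simp only [hS', hE₂, mul_add, add_mul, mul_sub, sub_mul, mul_one, one_mul,
          smul_mul_assoc, mul_smul_comm, smul_smul, mul_assoc, hN2a, hN2, mul_zero,
          zero_mul, smul_zero]
        module
      have hprod : (1 + π • S' + π^2 • E₂) * (1 + π • C)
          = 1 + π • (S' + C) + π^2 • (E₂ + S' * C + π • (E₂ * C)) := by
        simp only [mul_add, add_mul, one_mul, mul_one, smul_mul_assoc, mul_smul_comm,
          smul_smul, smul_add]
        module
      have hSum : S' + C = ∑ i ∈ range (n+1), Cc i := by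
        rw [Finset.sum_range_succ']
        have hs : S' = ∑ i ∈ range n, Cc (i+1) := by
          rw [hS', hS, Finset.mul_sum, Finset.sum_mul]
          exact Finset.sum_congr rfl fun i _ => hCstep i
        have hC0 : Cc 0 = C := by simp [hCc]
        rw [hs, hC0]
      refine ⟨E₂ + S' * C + π • (E₂ * C), ?_⟩
      calc x ^ (n+1) = x ^ n * x := pow_succ x n
        _ = ((1 + (n:R) • N) * (1 + π • S + π^2 • E)) * ((1 + N) * (1 + π • C)) := by
            rw [← hE, ← hfact]
        _ = (1 + (n:R) • N) * (((1 + π • S + π^2 • E) * (1 + N)) * (1 + π • C)) := by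
            simp only [mul_assoc]
        _ = (1 + (n:R) • N) * (((1 + N) * (1 + π • S' + π^2 • E₂)) * (1 + π • C)) := by
            rw [hmid]
        _ = ((1 + (n:R) • N) * (1 + N)) * ((1 + π • S' + π^2 • E₂) * (1 + π • C)) := by
            simp only [mul_assoc]
        _ = (1 + ((n:R)+1) • N) * (1 + π • (S' + C)
              + π^2 • (E₂ + S' * C + π • (E₂ * C))) := by rw [hUp, hprod]
        _ = (1 + ((n+1:ℕ):R) • N) * (1 + π • (∑ i ∈ range (n+1), Cc i)
              + π^2 • (E₂ + S' * C + π • (E₂ * C))) := by rw [hSum]; push_cast; rfl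
  obtain ⟨E, hE⟩ := main ℓ
  obtain ⟨q₁, hq₁⟩ := dvd_sum_id hp h3
  obtain ⟨q₂, hq₂⟩ := dvd_sum_sq hp h3
  have hexp : ∀ i : ℕ, Cc i
      = C + (i:R) • (C*N) - (i:R) • (N*C) - ((i:R)*(i:R)) • (N*(C*N)) := by
    intro i
    simp only [hCc]
    simp only [sub_mul, mul_add, add_mul, mul_sub, one_mul, mul_one, smul_mul_assoc,
      mul_smul_comm, smul_smul, mul_assoc]
    module
  set D : MatF R := C + (q₁:R) • (C*N) - (q₁:R) • (N*C) - ((q₂:R)) • (N*(C*N)) with hD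
  have hSval : ∑ i ∈ range ℓ, Cc i = π • D := by
    have e0 : ∑ i ∈ range ℓ, Cc i
        = ∑ i ∈ range ℓ, (C + (i:R) • (C*N) - (i:R) • (N*C) - ((i:R)*(i:R)) • (N*(C*N))) :=
      Finset.sum_congr rfl fun i _ => hexp i
    rw [e0]
    simp only [Finset.sum_sub_distrib, Finset.sum_add_distrib, Finset.sum_const,
      Finset.card_range, ← Finset.sum_smul]
    have c1 : ∑ i ∈ range ℓ, (i:R) = ((∑ i ∈ range ℓ, i : ℕ) : R) := by push_cast; rfl
    have c2 : ∑ i ∈ range ℓ, (i:R)*(i:R) = ((∑ i ∈ range ℓ, i*i : ℕ) : R) := by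
      push_cast; rfl
    rw [c1, c2, hq₁, hq₂, ← Nat.cast_smul_eq_nsmul R ℓ C, hD]
    push_cast
    simp only [smul_add, smul_sub, smul_smul, ← hπ]
    try module
  refine ⟨D + E + π • (N * (D + E)), ?_⟩
  rw [hE, hSval]
  simp only [smul_smul, mul_add, add_mul, one_mul, mul_one, mul_smul_comm,
    smul_mul_assoc, smul_add]
  module

end BasePow

/-! ### Concrete 2x2 matrix facts -/

section Concrete
variable {R : Type*} [CommRing R]

lemma matN_sq : (!![0,1;0,0] : MatF R) * !![0,1;0,0] = 0 := by
  ext i j; fin_cases i <;> fin_cases j <;> simp [Matrix.mul_fin_two]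

lemma one_add_smul_N (c : R) : (1 : MatF R) + c • !![0,1;0,0] = !![1,c;0,1] := by
  ext i j; fin_cases i <;> fin_cases j <;> simp [Matrix.one_fin_two]

lemma one_add_smul_mat (c : R) (A : MatF R) :
    (1 : MatF R) + c • A = !![1 + c * A 0 0, c * A 0 1; c * A 1 0, 1 + c * A 1 1] := by
  ext i j; fin_cases i <;> fin_cases j <;> simp [Matrix.one_fin_two]

lemma w_mul_w' : (!![0,-1;1,0] : MatF R) * !![0,1;-1,0] = 1 := by
  ext i j; fin_cases i <;> fin_cases j <;> simp [Matrix.mul_fin_two, Matrix.one_fin_two]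

lemma w_conj_N (c : R) :
    (!![0,-1;1,0] : MatF R) * (c • !![0,1;0,0]) * !![0,1;-1,0] = (-c) • !![0,0;1,0] := by
  ext i j; fin_cases i <;> fin_cases j <;> simp [Matrix.mul_fin_two]

lemma l_mul_l' (t : R) : (!![1,0;t,1] : MatF R) * !![1,0;-t,1] = 1 := by
  ext i j; fin_cases i <;> fin_cases j <;>
    simp [Matrix.mul_fin_two, Matrix.one_fin_two]

lemma l_conj_N (t : R) :
    (!![1,0;t,1] : MatF R) * !![0,1;0,0] * !![1,0;-t,1] = !![-t,1;-(t*t),t] := by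
  ext i j; fin_cases i <;> fin_cases j <;> simp [Matrix.mul_fin_two]

end Concrete



/-! ### The key lemma -/

set_option maxHeartbeats 1000000 in
lemma key {ℓ k : ℕ} (hℓ : ℓ.Prime) (hℓ3 : 3 < ℓ)
    (K : Subgroup (Matrix.SpecialLinearGroup (Fin 2) (ZMod (ℓ ^ (k + 1)))))
    (hsurj : ∀ s : Matrix.SpecialLinearGroup (Fin 2) (ZMod (ℓ ^ (k + 1))),
      ∃ m ∈ K, ∃ B : MatF (ZMod (ℓ ^ (k + 1))),
        (↑s : MatF (ZMod (ℓ ^ (k + 1)))) = ↑m + (ℓ : ZMod (ℓ ^ (k + 1))) • B) :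
    K = ⊤ := by
  haveI : NeZero (ℓ ^ (k + 1)) := ⟨pow_ne_zero _ hℓ.ne_zero⟩
  set π : ZMod (ℓ ^ (k + 1)) := (ℓ : ZMod (ℓ ^ (k + 1))) with hπ
  have hcoeinv : ∀ g : Matrix.SpecialLinearGroup (Fin 2) (ZMod (ℓ ^ (k + 1))),
      (↑(g⁻¹) : MatF (ZMod (ℓ ^ (k + 1)))) * (↑g : MatF (ZMod (ℓ ^ (k + 1)))) = 1 := by
    intro g
    rw [← Matrix.SpecialLinearGroup.coe_mul, inv_mul_cancel,
      Matrix.SpecialLinearGroup.coe_one]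
  have hcoeinv' : ∀ g : Matrix.SpecialLinearGroup (Fin 2) (ZMod (ℓ ^ (k + 1))),
      (↑g : MatF (ZMod (ℓ ^ (k + 1)))) * (↑(g⁻¹) : MatF (ZMod (ℓ ^ (k + 1)))) = 1 := by
    intro g
    rw [← Matrix.SpecialLinearGroup.coe_mul, mul_inv_cancel,
      Matrix.SpecialLinearGroup.coe_one]
  have L3 : ∀ (e : ℕ),
      (∀ g : Matrix.SpecialLinearGroup (Fin 2) (ZMod (ℓ ^ (k + 1))), (∃ A, (↑g : MatF (ZMod (ℓ ^ (k + 1)))) = 1 + π^e • A) → g ∈ K) →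
      ∀ g h : Matrix.SpecialLinearGroup (Fin 2) (ZMod (ℓ ^ (k + 1))),
      g ∈ K → (∃ D, (↑h : MatF (ZMod (ℓ ^ (k + 1)))) = ↑g + π^e • D) → h ∈ K := by
    intro e he g h hg hD
    obtain ⟨D, hD⟩ := hD
    have hmem : g⁻¹ * h ∈ K := by
      apply he
      refine ⟨(↑(g⁻¹) : MatF (ZMod (ℓ ^ (k + 1)))) * D, ?_⟩
      rw [Matrix.SpecialLinearGroup.coe_mul, hD, mul_add, hcoeinv g, mul_smul_comm]
    have hgh : h = g * (g⁻¹ * h) := by group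
    rw [hgh]; exact mul_mem hg hmem
  obtain ⟨x, hxK, B, hxc0⟩ := hsurj ⟨!![1,1;0,1], by simp [Matrix.det_fin_two_of]⟩
  have hxc : (↑x : MatF (ZMod (ℓ ^ (k + 1)))) = 1 + !![0,1;0,0] + π • (-B) := by
    have h1 : (!![1,1;0,1] : MatF (ZMod (ℓ ^ (k + 1)))) = 1 + !![0,1;0,0] := by
      have h2 := one_add_smul_N (1 : ZMod (ℓ^(k+1)))
      rw [one_smul] at h2; rw [← h2]
    have h3 : (!![1,1;0,1] : MatF (ZMod (ℓ ^ (k + 1)))) = ↑x + π • B := hxc0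
    have h4 : (↑x : MatF (ZMod (ℓ ^ (k + 1)))) = !![1,1;0,1] - π • B := by
      rw [h3]; abel
    rw [h4, h1, smul_neg]; abel
  have hxpow : ∀ j : ℕ, ∃ E, ((↑x : MatF (ZMod (ℓ ^ (k + 1)))))^(ℓ^(j+1))
      = 1 + π^(j+1) • !![0,1;0,0] + π^(j+2) • E := by
    intro j
    induction j with
    | zero =>
      obtain ⟨E, hE⟩ := base_pow hℓ hℓ3 matN_sq (-B) _ hxc
      refine ⟨E, ?_⟩
      simp only [zero_add, pow_one, ← hπ] at hE ⊢
      exact hE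
    | succ j ih =>
      obtain ⟨E, hE⟩ := ih
      have hy : ((↑x : MatF (ZMod (ℓ ^ (k + 1)))))^(ℓ^(j+1))
          = 1 + (ℓ : ZMod (ℓ ^ (k + 1)))^(j+1) • !![0,1;0,0]
            + (ℓ : ZMod (ℓ ^ (k + 1)))^(j+2) • E := by rw [← hπ]; exact hE
      obtain ⟨E', hE'⟩ := form_pow_step hℓ hℓ3 j _ _ _ hy
      refine ⟨E', ?_⟩
      rw [show ℓ^(j+1+1) = ℓ^(j+1)*ℓ from pow_succ ℓ (j+1), pow_mul, hE', ← hπ]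
  have hstep : ∀ i : ℕ,
      (∀ g : Matrix.SpecialLinearGroup (Fin 2) (ZMod (ℓ ^ (k + 1))), (∃ A, (↑g : MatF (ZMod (ℓ ^ (k + 1)))) = 1 + π^(i+2) • A) → g ∈ K) →
      (∀ g : Matrix.SpecialLinearGroup (Fin 2) (ZMod (ℓ ^ (k + 1))), (∃ A, (↑g : MatF (ZMod (ℓ ^ (k + 1)))) = 1 + π^(i+1) • A) → g ∈ K) := by
    intro i IH g hg0
    obtain ⟨A, hA⟩ := hg0
    have hdetgN : Matrix.det ((1 : MatF (ZMod (ℓ ^ (k + 1)))) + π^(i+1) • !![0,1;0,0]) = 1 := by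
      rw [one_add_smul_N]; simp [Matrix.det_fin_two_of]
    set gN : Matrix.SpecialLinearGroup (Fin 2) (ZMod (ℓ ^ (k + 1))) := ⟨_, hdetgN⟩ with hgNdef
    have hgNc : (↑gN : MatF (ZMod (ℓ ^ (k + 1)))) = 1 + π^(i+1) • !![0,1;0,0] := rfl
    obtain ⟨E, hE⟩ := hxpow i
    have hgNK : gN ∈ K := by
      refine L3 (i+2) IH (x^(ℓ^(i+1))) gN (pow_mem hxK _) ⟨-E, ?_⟩
      rw [Matrix.SpecialLinearGroup.coe_pow, hE, hgNc, smul_neg]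
      abel
    have hsq : (π^(i+1) • !![0,1;0,0] : MatF (ZMod (ℓ ^ (k + 1))))
        * (π^(i+1) • !![0,1;0,0]) = 0 := by
      rw [smul_mul_assoc, mul_smul_comm, matN_sq, smul_zero, smul_zero]
    have hgNpow : ∀ c : ZMod (ℓ^(k+1)), ∃ g' : Matrix.SpecialLinearGroup (Fin 2) (ZMod (ℓ ^ (k + 1))), g' ∈ K ∧
        (↑g' : MatF (ZMod (ℓ ^ (k + 1)))) = 1 + π^(i+1) • (c • !![0,1;0,0]) := by
      intro c
      refine ⟨gN ^ (c.val), pow_mem hgNK _, ?_⟩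
      rw [Matrix.SpecialLinearGroup.coe_pow, hgNc, one_add_pow_sq_zero hsq,
        ← Nat.cast_smul_eq_nsmul (ZMod (ℓ^(k+1))), ZMod.natCast_zmod_val,
        smul_smul, smul_smul, mul_comm]
    have hconj : ∀ s g' : Matrix.SpecialLinearGroup (Fin 2) (ZMod (ℓ ^ (k + 1))), g' ∈ K →
        (∃ A', (↑g' : MatF (ZMod (ℓ ^ (k + 1)))) = 1 + π^(i+1) • A') →
        s * g' * s⁻¹ ∈ K := by
      intro s g' hg' hA'
      obtain ⟨A', hA'⟩ := hA'
      obtain ⟨m, hmK, B', hB'⟩ := hsurj s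
      have hvc : (↑(m⁻¹ * s) : MatF (ZMod (ℓ ^ (k + 1))))
          = 1 + π • ((↑(m⁻¹) : MatF (ZMod (ℓ ^ (k + 1)))) * B') := by
        rw [Matrix.SpecialLinearGroup.coe_mul, hB', mul_add, hcoeinv m, mul_smul_comm]
      set v := m⁻¹ * s with hv
      set B₂ : MatF (ZMod (ℓ ^ (k + 1))) := (↑(m⁻¹) : MatF (ZMod (ℓ ^ (k + 1)))) * B'
        with hB₂
      have hcomm : (↑v : MatF (ZMod (ℓ ^ (k + 1)))) * (↑g' : MatF (ZMod (ℓ ^ (k + 1))))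
          = (↑g' : MatF (ZMod (ℓ ^ (k + 1)))) * (↑v : MatF (ZMod (ℓ ^ (k + 1)))) + π^(i+2) • (B₂ * A' - A' * B₂) := by
        rw [hvc, hA']
        simp only [mul_add, add_mul, one_mul, mul_one, smul_mul_assoc, mul_smul_comm,
          smul_smul, smul_sub]
        module
      have hvgv : (↑(v * g' * v⁻¹) : MatF (ZMod (ℓ ^ (k + 1))))
          = (↑g' : MatF (ZMod (ℓ ^ (k + 1)))) + π^(i+2) • ((B₂ * A' - A' * B₂) * (↑(v⁻¹) : MatF (ZMod (ℓ ^ (k + 1))))) := by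
        rw [Matrix.SpecialLinearGroup.coe_mul, Matrix.SpecialLinearGroup.coe_mul, hcomm,
          add_mul, smul_mul_assoc, mul_assoc, hcoeinv' v, mul_one]
      have hvgvK : v * g' * v⁻¹ ∈ K := L3 (i+2) IH g' _ hg' ⟨_, hvgv⟩
      have hrw : s * g' * s⁻¹ = m * (v * g' * v⁻¹) * m⁻¹ := by
        rw [hv]; group
      rw [hrw]
      exact mul_mem (mul_mem hmK hvgvK) (inv_mem hmK)
    have hconjcoe : ∀ (s : Matrix.SpecialLinearGroup (Fin 2) (ZMod (ℓ ^ (k + 1))))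
        (M : MatF (ZMod (ℓ ^ (k + 1))))
        (g' : Matrix.SpecialLinearGroup (Fin 2) (ZMod (ℓ ^ (k + 1)))),
        (↑g' : MatF (ZMod (ℓ ^ (k + 1)))) = 1 + π^(i+1) • M →
        (↑(s * g' * s⁻¹) : MatF (ZMod (ℓ ^ (k + 1))))
          = 1 + π^(i+1) • ((↑s : MatF (ZMod (ℓ ^ (k + 1)))) * M * (↑(s⁻¹) : MatF (ZMod (ℓ ^ (k + 1))))) := by
      intro s M g' hg'
      rw [Matrix.SpecialLinearGroup.coe_mul, Matrix.SpecialLinearGroup.coe_mul, hg',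
        mul_add, mul_one, add_mul, hcoeinv' s, mul_smul_comm, smul_mul_assoc]
    set a : ZMod (ℓ^(k+1)) := A 0 0 with ha
    set b : ZMod (ℓ^(k+1)) := A 0 1 with hb
    set c : ZMod (ℓ^(k+1)) := A 1 0 with hc
    set d : ZMod (ℓ^(k+1)) := A 1 1 with hd
    set t : ZMod (ℓ^(k+1)) := -a with ht
    have hgdet : Matrix.det ((1 : MatF (ZMod (ℓ ^ (k + 1)))) + π^(i+1) • A) = 1 := by
      rw [← hA]; exact g.prop
    rw [one_add_smul_mat, Matrix.det_fin_two_of] at hgdet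
    obtain ⟨r, hr⟩ : ∃ r, π^(i+1) * (a + d) = π^(i+2) * r :=
      ⟨π^i * (b * c - a * d), by linear_combination hgdet⟩
    have hdetw : Matrix.det (!![0,-1;1,0] : MatF (ZMod (ℓ ^ (k + 1)))) = 1 := by
      simp [Matrix.det_fin_two_of]
    have hdetw' : Matrix.det (!![0,1;-1,0] : MatF (ZMod (ℓ ^ (k + 1)))) = 1 := by
      simp [Matrix.det_fin_two_of]
    set wS : Matrix.SpecialLinearGroup (Fin 2) (ZMod (ℓ ^ (k + 1))) := ⟨_, hdetw⟩ with hwS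
    have hwinv : wS⁻¹ = ⟨_, hdetw'⟩ := inv_eq_of_mul_eq_one_right (by
      apply Subtype.ext
      show (!![0,-1;1,0] : MatF (ZMod (ℓ ^ (k + 1)))) * !![0,1;-1,0] = 1
      exact w_mul_w')
    have hdetl : Matrix.det (!![1,0;t,1] : MatF (ZMod (ℓ ^ (k + 1)))) = 1 := by
      simp [Matrix.det_fin_two_of]
    have hdetl' : Matrix.det (!![1,0;-t,1] : MatF (ZMod (ℓ ^ (k + 1)))) = 1 := by
      simp [Matrix.det_fin_two_of]
    set lS : Matrix.SpecialLinearGroup (Fin 2) (ZMod (ℓ ^ (k + 1))) := ⟨_, hdetl⟩ with hlS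
    have hlinv : lS⁻¹ = ⟨_, hdetl'⟩ := inv_eq_of_mul_eq_one_right (by
      apply Subtype.ext
      show (!![1,0;t,1] : MatF (ZMod (ℓ ^ (k + 1)))) * !![1,0;-t,1] = 1
      exact l_mul_l' t)
    obtain ⟨G1, hG1K, hG1⟩ := hgNpow b
    obtain ⟨g2, hg2K, hg2⟩ := hgNpow (-c)
    obtain ⟨G4, hG4K, hG4⟩ := hgNpow (-1)
    obtain ⟨g5, hg5K, hg5⟩ := hgNpow (-(t*t))
    have hG2K : wS * g2 * wS⁻¹ ∈ K := hconj _ _ hg2K ⟨_, hg2⟩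
    have hG2 : (↑(wS * g2 * wS⁻¹) : MatF (ZMod (ℓ ^ (k + 1))))
        = 1 + π^(i+1) • (c • !![0,0;1,0]) := by
      rw [hconjcoe wS _ g2 hg2, hwinv]
      rw [show ((⟨!![0,-1;1,0], hdetw⟩ : Matrix.SpecialLinearGroup (Fin 2) (ZMod (ℓ ^ (k + 1)))) :
        MatF (ZMod (ℓ ^ (k + 1)))) = !![0,-1;1,0] from rfl]
      rw [show ((⟨!![0,1;-1,0], hdetw'⟩ : Matrix.SpecialLinearGroup (Fin 2) (ZMod (ℓ ^ (k + 1)))) :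
        MatF (ZMod (ℓ ^ (k + 1)))) = !![0,1;-1,0] from rfl]
      rw [w_conj_N, neg_neg]
    have hG3K : lS * gN * lS⁻¹ ∈ K := hconj _ _ hgNK ⟨_, hgNc⟩
    have hG3 : (↑(lS * gN * lS⁻¹) : MatF (ZMod (ℓ ^ (k + 1))))
        = 1 + π^(i+1) • !![-t,1;-(t*t),t] := by
      rw [hconjcoe lS _ gN hgNc, hlinv]
      rw [show ((⟨!![1,0;t,1], hdetl⟩ : Matrix.SpecialLinearGroup (Fin 2) (ZMod (ℓ ^ (k + 1)))) :
        MatF (ZMod (ℓ ^ (k + 1)))) = !![1,0;t,1] from rfl]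
      rw [show ((⟨!![1,0;-t,1], hdetl'⟩ : Matrix.SpecialLinearGroup (Fin 2) (ZMod (ℓ ^ (k + 1)))) :
        MatF (ZMod (ℓ ^ (k + 1)))) = !![1,0;-t,1] from rfl]
      rw [l_conj_N]
    have hG5K : wS * g5 * wS⁻¹ ∈ K := hconj _ _ hg5K ⟨_, hg5⟩
    have hG5 : (↑(wS * g5 * wS⁻¹) : MatF (ZMod (ℓ ^ (k + 1))))
        = 1 + π^(i+1) • ((t*t) • !![0,0;1,0]) := by
      rw [hconjcoe wS _ g5 hg5, hwinv]
      rw [show ((⟨!![0,-1;1,0], hdetw⟩ : Matrix.SpecialLinearGroup (Fin 2) (ZMod (ℓ ^ (k + 1)))) :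
        MatF (ZMod (ℓ ^ (k + 1)))) = !![0,-1;1,0] from rfl]
      rw [show ((⟨!![0,1;-1,0], hdetw'⟩ : Matrix.SpecialLinearGroup (Fin 2) (ZMod (ℓ ^ (k + 1)))) :
        MatF (ZMod (ℓ ^ (k + 1)))) = !![0,1;-1,0] from rfl]
      rw [w_conj_N, neg_neg]
    have f1 : (↑G1 : MatF (ZMod (ℓ ^ (k + 1))))
        = 1 + π^(i+1) • (b • !![0,1;0,0]) + π^(i+2) • 0 := by
      rw [hG1, smul_zero, add_zero]
    have f2 : (↑(wS * g2 * wS⁻¹) : MatF (ZMod (ℓ ^ (k + 1))))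
        = 1 + π^(i+1) • (c • !![0,0;1,0]) + π^(i+2) • 0 := by
      rw [hG2, smul_zero, add_zero]
    have f3 : (↑(lS * gN * lS⁻¹) : MatF (ZMod (ℓ ^ (k + 1))))
        = 1 + π^(i+1) • !![-t,1;-(t*t),t] + π^(i+2) • 0 := by
      rw [hG3, smul_zero, add_zero]
    have f4 : (↑G4 : MatF (ZMod (ℓ ^ (k + 1))))
        = 1 + π^(i+1) • ((-1 : ZMod (ℓ^(k+1))) • !![0,1;0,0]) + π^(i+2) • 0 := by
      rw [hG4, smul_zero, add_zero]
    have f5 : (↑(wS * g5 * wS⁻¹) : MatF (ZMod (ℓ ^ (k + 1))))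
        = 1 + π^(i+1) • ((t*t) • !![0,0;1,0]) + π^(i+2) • 0 := by
      rw [hG5, smul_zero, add_zero]
    obtain ⟨P2, hP2⟩ := form_mul π i f1 f2
    obtain ⟨P3, hP3⟩ := form_mul π i hP2 f3
    obtain ⟨P4, hP4⟩ := form_mul π i hP3 f4
    obtain ⟨P5, hP5⟩ := form_mul π i hP4 f5
    set Z := G1 * (wS * g2 * wS⁻¹) * (lS * gN * lS⁻¹) * G4 * (wS * g5 * wS⁻¹) with hZ
    have hZK : Z ∈ K :=
      mul_mem (mul_mem (mul_mem (mul_mem hG1K hG2K) hG3K) hG4K) hG5K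
    have hZc : (↑Z : MatF (ZMod (ℓ ^ (k + 1))))
        = 1 + π^(i+1) • (b • !![0,1;0,0] + c • !![0,0;1,0] + !![-t,1;-(t*t),t]
            + (-1 : ZMod (ℓ^(k+1))) • !![0,1;0,0] + (t*t) • !![0,0;1,0]) + π^(i+2) • P5 := by
      rw [hZ]
      rw [Matrix.SpecialLinearGroup.coe_mul, Matrix.SpecialLinearGroup.coe_mul,
        Matrix.SpecialLinearGroup.coe_mul, Matrix.SpecialLinearGroup.coe_mul]
      exact hP5
    have hAeta : A = !![a,b;c,d] := by
      ext ii jj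
      fin_cases ii <;> fin_cases jj <;> simp [ha, hb, hc, hd]
    have hdiff : π^(i+1) • A
        = π^(i+1) • (b • !![0,1;0,0] + c • !![0,0;1,0] + !![-t,1;-(t*t),t]
            + (-1 : ZMod (ℓ^(k+1))) • !![0,1;0,0] + (t*t) • !![0,0;1,0])
          + π^(i+2) • (r • !![0,0;0,1]) := by
      rw [hAeta, ht]
      ext ii jj
      fin_cases ii <;> fin_cases jj <;>
        simp [Matrix.add_apply, Matrix.smul_apply, smul_eq_mul]
      all_goals linear_combination hr
    have hfinal : (↑g : MatF (ZMod (ℓ ^ (k + 1))))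
        = (↑Z : MatF (ZMod (ℓ ^ (k + 1)))) + π^(i+2) • (r • !![0,0;0,1] - P5) := by
      rw [hA, hZc, hdiff, smul_sub]
      abel
    exact L3 (i+2) IH Z g hZK ⟨_, hfinal⟩
  -- the base case and downward induction
  have hbase : ∀ g : Matrix.SpecialLinearGroup (Fin 2) (ZMod (ℓ ^ (k + 1))), (∃ A, (↑g : MatF (ZMod (ℓ ^ (k + 1)))) = 1 + π^(k+1) • A) → g ∈ K := by
    intro g hg
    obtain ⟨A, hA⟩ := hg
    have hπ0 : π^(k+1) = 0 := by
      rw [hπ, ← Nat.cast_pow, ZMod.natCast_self]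
    have hg1 : g = 1 := by
      apply Subtype.ext
      rw [hA, hπ0, zero_smul, add_zero, Matrix.SpecialLinearGroup.coe_one]
    rw [hg1]; exact one_mem K
  have hmain : ∀ dd : ℕ, dd ≤ k →
      ∀ g : Matrix.SpecialLinearGroup (Fin 2) (ZMod (ℓ ^ (k + 1))), (∃ A, (↑g : MatF (ZMod (ℓ ^ (k + 1)))) = 1 + π^(k+1-dd) • A) → g ∈ K := by
    intro dd
    induction dd with
    | zero => intro _ g hg; exact hbase g (by simpa using hg)
    | succ dd ih =>
      intro hdk g hg
      have h1 : k + 1 - (dd+1) = (k - dd - 1) + 1 := by omega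
      have h2 : k + 1 - dd = (k - dd - 1) + 2 := by omega
      exact hstep (k - dd - 1) (fun g' hg' => ih (by omega) g' (by rwa [h2])) g (by rwa [← h1])
  rw [eq_top_iff]
  intro s _
  obtain ⟨m, hmK, B', hB'⟩ := hsurj s
  have hvK : m⁻¹ * s ∈ K := by
    apply hmain k (le_refl k)
    refine ⟨(↑(m⁻¹) : MatF (ZMod (ℓ ^ (k + 1)))) * B', ?_⟩
    rw [show k + 1 - k = 1 from by omega, pow_one, Matrix.SpecialLinearGroup.coe_mul, hB',
      mul_add, hcoeinv m, mul_smul_comm]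
  have hms : s = m * (m⁻¹ * s) := by group
  rw [hms]; exact mul_mem hmK hvK

end SL2FrattiniAux

/-- For a prime `ℓ > 3` and any `k ≥ 0`, the reduction map
`SL₂(ℤ/ℓ^(k+1)) → SL₂(ℤ/ℓ)` is a Frattini cover. -/
theorem SL2_mod_ell_power_frattini
    (ℓ : ℕ) (hℓ : ℓ.Prime) (hℓ3 : 3 < ℓ) (k : ℕ)
    (K : Subgroup (Matrix.SpecialLinearGroup (Fin 2) (ZMod (ℓ ^ (k + 1)))))
    (hK : Subgroup.map
      (Matrix.SpecialLinearGroup.map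
        (ZMod.castHom (dvd_pow_self ℓ (Nat.succ_ne_zero k)) (ZMod ℓ))) K = ⊤) :
    K = ⊤ := by
  haveI : NeZero (ℓ ^ (k + 1)) := ⟨pow_ne_zero _ hℓ.ne_zero⟩
  apply SL2FrattiniAux.key hℓ hℓ3 K
  intro s
  have hs : Matrix.SpecialLinearGroup.map
      (ZMod.castHom (dvd_pow_self ℓ (Nat.succ_ne_zero k)) (ZMod ℓ)) s ∈
      Subgroup.map (Matrix.SpecialLinearGroup.map
        (ZMod.castHom (dvd_pow_self ℓ (Nat.succ_ne_zero k)) (ZMod ℓ))) K := by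
    rw [hK]; trivial
  obtain ⟨m, hmK, hm⟩ := Subgroup.mem_map.mp hs
  refine ⟨m, hmK, ?_⟩
  have hent : ∀ ii jj, ∃ z, (↑s : SL2FrattiniAux.MatF (ZMod (ℓ^(k+1)))) ii jj
      - (↑m : SL2FrattiniAux.MatF (ZMod (ℓ^(k+1)))) ii jj = (ℓ : ZMod (ℓ^(k+1))) * z := by
    intro ii jj
    have h0 : (ZMod.castHom (dvd_pow_self ℓ (Nat.succ_ne_zero k)) (ZMod ℓ))
        ((↑s : SL2FrattiniAux.MatF (ZMod (ℓ^(k+1)))) ii jj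
          - (↑m : SL2FrattiniAux.MatF (ZMod (ℓ^(k+1)))) ii jj) = 0 := by
      have hcoe := congrArg
        (fun q : Matrix.SpecialLinearGroup (Fin 2) (ZMod ℓ) =>
          (↑q : SL2FrattiniAux.MatF (ZMod ℓ)) ii jj) hm
      simp only [Matrix.SpecialLinearGroup.map_apply_coe, RingHom.mapMatrix_apply,
        Matrix.map_apply] at hcoe
      rw [map_sub, hcoe, sub_self]
    set y := (↑s : SL2FrattiniAux.MatF (ZMod (ℓ^(k+1)))) ii jj
      - (↑m : SL2FrattiniAux.MatF (ZMod (ℓ^(k+1)))) ii jj with hy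
    rw [ZMod.castHom_apply, ZMod.cast_eq_val] at h0
    obtain ⟨cc, hcc⟩ := (ZMod.natCast_eq_zero_iff _ _).mp h0
    refine ⟨(cc : ZMod (ℓ^(k+1))), ?_⟩
    calc y = ((y.val : ℕ) : ZMod (ℓ^(k+1))) := (ZMod.natCast_zmod_val y).symm
      _ = (((ℓ * cc : ℕ)) : ZMod (ℓ^(k+1))) := by rw [← hcc]
      _ = (ℓ : ZMod (ℓ^(k+1))) * (cc : ZMod (ℓ^(k+1))) := by push_cast; ring
  choose Bf hBf using hent
  refine ⟨Matrix.of Bf, ?_⟩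
  ext ii jj
  have hee := hBf ii jj
  simp only [Matrix.add_apply, Matrix.smul_apply, Matrix.of_apply, smul_eq_mul]
  linear_combination hee
end

section
/- Let G be a finite group acting on A = (Z/ℓ^{k+1})^t for a prime ℓ, inducing an action on A' = (Z/ℓ)^t via reduction. Then the natural surjection A ⋊ G → A' ⋊ G is a Frattini cover if and only if every subgroup H of A ⋊ G mapping onto A' ⋊ G contains A; in particular the surjection (Z/ℓ²)^t ⋊ G → (Z/ℓ)^t ⋊ G induced by Z/ℓ² → Z/ℓ is a Frattini cover whenever (|G|, ℓ) = 1. -/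
/-- Componentwise reduction `(ℤ/ℓ^(k+1))^t → (ℤ/ℓ)^t`, written multiplicatively. -/
def redHom (ℓ k t : ℕ) :
    Multiplicative (Fin t → ZMod (ℓ ^ (k + 1))) →* Multiplicative (Fin t → ZMod ℓ) :=
  AddMonoidHom.toMultiplicative
    (((ZMod.castHom (dvd_pow_self ℓ (Nat.succ_ne_zero k)) (ZMod ℓ)).toAddMonoidHom).compLeft
      (Fin t))

/-- Let a finite group `G` act on `A = (ℤ/ℓ^(k+1))^t`, inducing (via the
componentwise reduction `redHom`) an action on `A' = (ℤ/ℓ)^t`.  Then the natural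
surjection `A ⋊ G → A' ⋊ G` is a Frattini cover iff every subgroup of `A ⋊ G` mapping
onto `A' ⋊ G` contains `A`; and in particular, for `k = 1` (the case
`(ℤ/ℓ²)^t ⋊ G → (ℤ/ℓ)^t ⋊ G` induced by `ℤ/ℓ² → ℤ/ℓ`), it is a Frattini cover whenever
`(|G|, ℓ) = 1`. -/
theorem semidirect_product_frattini_cover
    (ℓ : ℕ) (hℓ : ℓ.Prime) (t k : ℕ)
    {G : Type*} [Group G] [Finite G]
    (φ : G →* MulAut (Multiplicative (Fin t → ZMod (ℓ ^ (k + 1)))))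
    (φ' : G →* MulAut (Multiplicative (Fin t → ZMod ℓ)))
    (hcompat : ∀ g : G,
      (redHom ℓ k t).comp (φ g).toMonoidHom = (φ' g).toMonoidHom.comp (redHom ℓ k t)) :
    let Ψ : (Multiplicative (Fin t → ZMod (ℓ ^ (k + 1))) ⋊[φ] G) →*
        (Multiplicative (Fin t → ZMod ℓ) ⋊[φ'] G) :=
      SemidirectProduct.map (redHom ℓ k t) (MonoidHom.id G) (fun g => hcompat g)
    ((∀ K : Subgroup (Multiplicative (Fin t → ZMod (ℓ ^ (k + 1))) ⋊[φ] G),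
        Subgroup.map Ψ K = ⊤ → K = ⊤) ↔
      (∀ K : Subgroup (Multiplicative (Fin t → ZMod (ℓ ^ (k + 1))) ⋊[φ] G),
        Subgroup.map Ψ K = ⊤ →
          (SemidirectProduct.inl :
            Multiplicative (Fin t → ZMod (ℓ ^ (k + 1))) →*
              Multiplicative (Fin t → ZMod (ℓ ^ (k + 1))) ⋊[φ] G).range ≤ K)) ∧
    (k = 1 → (Nat.card G).Coprime ℓ →
      ∀ K : Subgroup (Multiplicative (Fin t → ZMod (ℓ ^ (k + 1))) ⋊[φ] G),
        Subgroup.map Ψ K = ⊤ → K = ⊤) := by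
  intro Ψ
  haveI : NeZero (ℓ ^ (k + 1)) := ⟨pow_ne_zero _ hℓ.pos.ne'⟩
  -- Main lemma: any subgroup mapping onto the target contains the range of `inl`.
  have main : ∀ K : Subgroup (Multiplicative (Fin t → ZMod (ℓ ^ (k + 1))) ⋊[φ] G),
      Subgroup.map Ψ K = ⊤ →
        (SemidirectProduct.inl :
            Multiplicative (Fin t → ZMod (ℓ ^ (k + 1))) →*
              Multiplicative (Fin t → ZMod (ℓ ^ (k + 1))) ⋊[φ] G).range ≤ K := by
    intro K hK
    -- The additive subgroup of elements `a` with `inl a ∈ K`.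
    set S : AddSubgroup (Fin t → ZMod (ℓ ^ (k + 1))) :=
      Subgroup.toAddSubgroup'
        (K.comap (SemidirectProduct.inl (φ := φ))) with hS
    -- Claim 1: S surjects onto (ZMod ℓ)^t under reduction.
    have claim1 : ∀ a' : Fin t → ZMod ℓ, ∃ a ∈ S,
        ∀ i, ZMod.cast (a i) = a' i := by
      intro a'
      have : (SemidirectProduct.inl (φ := φ') (Multiplicative.ofAdd a')) ∈
          Subgroup.map Ψ K := by rw [hK]; trivial
      obtain ⟨x, hxK, hx⟩ := this
      have hright : x.right = 1 := by
        have := congrArg SemidirectProduct.right hx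
        simpa [Ψ, SemidirectProduct.map_right] using this
      have hxeq : x = SemidirectProduct.inl x.left := by
        conv_lhs => rw [← SemidirectProduct.inl_left_mul_inr_right x]
        rw [hright]; simp
      refine ⟨Multiplicative.toAdd x.left, ?_, ?_⟩
      · simpa [hS, Subgroup.mem_comap] using (hxeq ▸ hxK)
      · have := congrArg SemidirectProduct.left hx
        have h2 : redHom ℓ k t x.left = Multiplicative.ofAdd a' := by
          simpa [Ψ, SemidirectProduct.map_left] using this
        intro i
        have h3 := congrFun (congrArg Multiplicative.toAdd h2) i
        simpa [redHom, AddMonoidHom.compLeft, ZMod.castHom_apply] using h3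
    -- Kernel: elements of the kernel of componentwise reduction are multiples of ℓ.
    have ker_red : ∀ x : ZMod (ℓ ^ (k + 1)), (ZMod.cast x : ZMod ℓ) = 0 →
        ∃ y : ZMod (ℓ ^ (k + 1)), x = (ℓ : ZMod (ℓ ^ (k + 1))) * y := by
      intro x hx
      have h1 : ((x.val : ℕ) : ZMod ℓ) = 0 := by rw [ZMod.natCast_val, hx]
      obtain ⟨m, hm⟩ := (ZMod.natCast_eq_zero_iff _ _).1 h1
      exact ⟨(m : ZMod (ℓ ^ (k + 1))), by
        rw [← ZMod.natCast_zmod_val x, hm]; push_cast; ring⟩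
    -- Induction: every `a` is `s + ℓ^j * c` with `s ∈ S`.
    have E : ∀ j : ℕ, ∀ a : Fin t → ZMod (ℓ ^ (k + 1)), ∃ s ∈ S,
        ∃ c : Fin t → ZMod (ℓ ^ (k + 1)),
          ∀ i, a i = s i + (ℓ : ZMod (ℓ ^ (k + 1))) ^ j * c i := by
      intro j
      induction j with
      | zero => intro a; exact ⟨0, zero_mem S, a, fun i => by simp⟩
      | succ j ih =>
        intro a
        obtain ⟨s, hs, c, hc⟩ := ih a
        obtain ⟨s', hs', hred⟩ := claim1 (fun i => ZMod.cast (c i))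
        have : ∀ i, (ZMod.cast ((c - s') i) : ZMod ℓ) = 0 := by
          intro i
          have : ((c - s') i : ZMod (ℓ ^ (k+1))) = c i - s' i := rfl
          rw [this, ZMod.cast_sub (dvd_pow_self ℓ (Nat.succ_ne_zero k)), hred i, sub_self]
        choose d hd using fun i => ker_red _ (this i)
        refine ⟨s + (ℓ ^ j) • s', AddSubgroup.add_mem S hs (AddSubgroup.nsmul_mem S hs' _), d, ?_⟩
        intro i
        have h2 : c i = s' i + (ℓ : ZMod (ℓ ^ (k+1))) * d i := by
          have h3 : (c - s') i = c i - s' i := rfl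
          have := hd i; rw [h3] at this; linear_combination this
        have h4 : ((ℓ ^ j) • s') i = (ℓ : ZMod (ℓ ^ (k+1))) ^ j * s' i := by
          simp [nsmul_eq_mul]
        simp only [Pi.add_apply]
        rw [h4, hc i, h2]; ring
    -- conclude
    rintro x ⟨a, rfl⟩
    obtain ⟨s, hs, c, hc⟩ := E (k + 1) (Multiplicative.toAdd a)
    have hc0 : (ℓ : ZMod (ℓ ^ (k + 1))) ^ (k + 1) = 0 := by
      rw [← Nat.cast_pow, ZMod.natCast_self]
    have : Multiplicative.toAdd a = s := by
      funext i; rw [hc i, hc0]; ring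
    have hmem : Multiplicative.ofAdd s ∈ K.comap (SemidirectProduct.inl (φ := φ)) := hs
    rw [Subgroup.mem_comap] at hmem
    simpa [← this] using hmem
  refine ⟨⟨fun h K hK => by rw [h K hK]; exact le_top, fun _ K hK => ?_⟩,
    fun _ _ K hK => ?_⟩
  all_goals {
    have hle := main K hK
    have hker : Ψ.ker ≤ K := by
      intro x hx
      have hr : x.right = 1 := by
        have := congrArg SemidirectProduct.right hx
        simpa [Ψ, SemidirectProduct.map_right] using this
      have hxeq : x = SemidirectProduct.inl x.left := by
        conv_lhs => rw [← SemidirectProduct.inl_left_mul_inr_right x]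
        rw [hr]; simp
      rw [hxeq]; exact hle ⟨x.left, rfl⟩
    rw [eq_top_iff]
    intro x _
    have : x ∈ Subgroup.comap Ψ (Subgroup.map Ψ K) := by rw [hK]; trivial
    rw [Subgroup.comap_map_eq, sup_eq_left.2 hker] at this
    exact this }
end
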